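/- With h(ρ) := r([w⁻¹(ρ),1], v) and ρ* the unique fixed point of h (so h(ρ*) = ρ*), and assuming v(x) ≤ v̄ for all x, the inequality (ρ − ρ*)(h(ρ) − ρ) ≤ −(1/(1+v̄))·(ρ − ρ*)² holds for all ρ ∈ [0,1]. -/

import Mathlib

open MeasureTheory Set

lemma intOn_mul_bdd {v g : ℝ → ℝ} {s : Set ℝ} (hs : MeasurableSet s)
    (hv : IntegrableOn v s) (hg : AEStronglyMeasurable g (volume.restrict s))
    {C : ℝ} (hC : ∀ x ∈ s, |g x| ≤ C) :
    IntegrableOn (fun x => v x * g x) s := by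
  refine Integrable.mono' (g := fun x => C * |v x|) (hv.norm.const_mul C)
    (hv.aestronglyMeasurable.mul hg) ?_
  refine (ae_restrict_iff' hs).2 (Filter.Eventually.of_forall fun x hx => ?_)
  have h1 := hC x hx
  have h0 : (0:ℝ) ≤ |g x| := abs_nonneg _
  show ‖v x * g x‖ ≤ C * |v x|
  rw [Real.norm_eq_abs, abs_mul]
  nlinarith [abs_nonneg (v x)]

lemma Fint {w v : ℝ → ℝ}
    (hw_cont : ContinuousOn w (Icc 0 1))
    (hw_range : ∀ x ∈ Icc (0:ℝ) 1, w x ∈ Icc (0:ℝ) 1)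
    (hv_int : IntegrableOn v (Icc 0 1)) (ρ : ℝ) :
    IntegrableOn (fun x => v x * max (w x - ρ) 0) (Icc 0 1) := by
  refine intOn_mul_bdd measurableSet_Icc hv_int
    ((((hw_cont.sub continuousOn_const).sup continuousOn_const).aestronglyMeasurable
      measurableSet_Icc : AEStronglyMeasurable (fun x => max (w x - ρ) 0) _)) (C := 1 + |ρ|) fun x hx => ?_
  have h1 := (hw_range x hx).1
  have h2 := (hw_range x hx).2
  rw [abs_of_nonneg (le_max_right _ _)]
  rcases le_or_gt (w x - ρ) 0 with hc | hc
  · rw [max_eq_right hc]; positivity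
  · rw [max_eq_left hc.le]
    have := neg_abs_le ρ
    linarith

lemma keyeq {w v : ℝ → ℝ}
    (hw_cont : ContinuousOn w (Icc 0 1))
    (hw_mono : StrictMonoOn w (Icc 0 1))
    (hw_range : ∀ x ∈ Icc (0:ℝ) 1, w x ∈ Icc (0:ℝ) 1)
    (hv_int : IntegrableOn v (Icc 0 1))
    {ρ a : ℝ}
    (ha : IsLeast {x | x ∈ Icc (0:ℝ) 1 ∧ ρ ≤ w x} a) :
    ∫ x in Icc (0:ℝ) 1, v x * max (w x - ρ) 0
      = (∫ x in Icc a 1, v x * w x) - ρ * ∫ x in Icc a 1, v x := by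
  obtain ⟨⟨⟨ha0, ha1⟩, haw⟩, hlb⟩ := ha
  have hsub : Icc a 1 ⊆ Icc (0:ℝ) 1 := Icc_subset_Icc ha0 le_rfl
  -- decomposition of the interval
  have hdecomp : Ico 0 a ∪ Icc a 1 = Icc (0:ℝ) 1 := Ico_union_Icc_eq_Icc ha0 ha1
  have hdisj : Disjoint (Ico (0:ℝ) a) (Icc a 1) := by
    rw [Set.disjoint_left]
    intro x hx hx'
    exact absurd hx'.1 (not_le.mpr hx.2)
  have hF := Fint hw_cont hw_range hv_int ρ
  have hF1 : IntegrableOn (fun x => v x * max (w x - ρ) 0) (Ico 0 a) :=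
    hF.mono_set (fun x hx => ⟨hx.1, hx.2.le.trans ha1⟩)
  have hF2 : IntegrableOn (fun x => v x * max (w x - ρ) 0) (Icc a 1) := hF.mono_set hsub
  have hsplit : ∫ x in Icc (0:ℝ) 1, v x * max (w x - ρ) 0
      = (∫ x in Ico (0:ℝ) a, v x * max (w x - ρ) 0)
        + ∫ x in Icc a 1, v x * max (w x - ρ) 0 := by
    rw [← hdecomp]
    exact setIntegral_union hdisj measurableSet_Icc hF1 hF2
  have hzero : ∫ x in Ico (0:ℝ) a, v x * max (w x - ρ) 0 = 0 := by
    rw [setIntegral_congr_fun measurableSet_Ico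
      (g := fun _ => (0:ℝ)) ?_, integral_zero]
    intro x hx
    have hx1 : x ∈ Icc (0:ℝ) 1 := ⟨hx.1, hx.2.le.trans ha1⟩
    have hwx : w x < ρ := by
      by_contra hcon
      exact absurd (hlb ⟨hx1, not_lt.mp hcon⟩) (not_le.mpr hx.2)
    simp [max_eq_right (by linarith : w x - ρ ≤ 0)]
  have hcong : ∫ x in Icc a 1, v x * max (w x - ρ) 0
      = ∫ x in Icc a 1, (v x * w x - v x * ρ) := by
    refine setIntegral_congr_fun measurableSet_Icc fun x hx => ?_
    have hx1 : x ∈ Icc (0:ℝ) 1 := hsub hx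
    have hwx : ρ ≤ w x := haw.trans (hw_mono.monotoneOn ⟨ha0, ha1⟩ hx1 hx.1)
    rw [max_eq_left (by linarith)]
    ring
  have hIvw : IntegrableOn (fun x => v x * w x) (Icc a 1) :=
    (intOn_mul_bdd measurableSet_Icc hv_int
      (hw_cont.aestronglyMeasurable measurableSet_Icc) (C := 1) fun x hx => by
        have h1 := (hw_range x hx).1; have h2 := (hw_range x hx).2
        rw [abs_of_nonneg h1]; exact h2).mono_set hsub
  have hIv : IntegrableOn (fun x => v x * ρ) (Icc a 1) :=
    (hv_int.mono_set hsub).mul_const ρ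
  rw [hsplit, hzero, hcong, integral_sub hIvw hIv, integral_mul_const, zero_add]
  ring

theorem stmt2 (w v : ℝ → ℝ) (vmin vbar : ℝ)
    (hw_cont : ContinuousOn w (Icc 0 1))
    (hw_mono : StrictMonoOn w (Icc 0 1))
    (hw_range : ∀ x ∈ Icc (0:ℝ) 1, w x ∈ Icc (0:ℝ) 1)
    (hv_int : IntegrableOn v (Icc 0 1))
    (hvmin : 0 < vmin)
    (hv_mem : ∀ x ∈ Icc (0:ℝ) 1, v x ∈ Icc vmin vbar)
    (winv : ℝ → ℝ)
    (hwinv : ∀ ρ ∈ Icc (0:ℝ) 1, IsLeast {x | x ∈ Icc (0:ℝ) 1 ∧ ρ ≤ w x} (winv ρ))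
    (h : ℝ → ℝ)
    (hh : ∀ ρ, h ρ =
      (∫ x in Icc (winv ρ) 1, v x * w x) / (1 + ∫ x in Icc (winv ρ) 1, v x))
    (ρstar : ℝ) (hρstar : ρstar ∈ Icc (0:ℝ) 1) (hfix : h ρstar = ρstar)
    (huniq : ∀ ρ ∈ Icc (0:ℝ) 1, h ρ = ρ → ρ = ρstar) :
    ∀ ρ ∈ Icc (0:ℝ) 1,
      (ρ - ρstar) * (h ρ - ρ) ≤ -(1 / (1 + vbar)) * (ρ - ρstar)^2 := by
  have hvbar : vmin ≤ vbar := by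
    have := hv_mem 0 ⟨le_rfl, zero_le_one⟩; exact this.1.trans this.2
  have hvbar0 : (0:ℝ) < vbar := hvmin.trans_le hvbar
  have h1v : (0:ℝ) < 1 + vbar := by linarith
  -- F is the truncated integral
  set F : ℝ → ℝ := fun ρ => ∫ x in Icc (0:ℝ) 1, v x * max (w x - ρ) 0 with hF
  -- bounds on A and the key identity, for any ρ in [0,1]
  have master : ∀ ρ ∈ Icc (0:ℝ) 1,
      (0 ≤ ∫ x in Icc (winv ρ) 1, v x) ∧ (∫ x in Icc (winv ρ) 1, v x) ≤ vbar ∧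
      F ρ = (∫ x in Icc (winv ρ) 1, v x * w x) - ρ * ∫ x in Icc (winv ρ) 1, v x := by
    intro ρ hρ
    obtain ⟨⟨⟨ha0, ha1⟩, haw⟩, hlb⟩ := hwinv ρ hρ
    have hsub : Icc (winv ρ) 1 ⊆ Icc (0:ℝ) 1 := Icc_subset_Icc ha0 le_rfl
    refine ⟨?_, ?_, keyeq hw_cont hw_mono hw_range hv_int (hwinv ρ hρ)⟩
    · exact setIntegral_nonneg measurableSet_Icc fun x hx =>
        le_of_lt (hvmin.trans_le (hv_mem x (hsub hx)).1)
    · have hle : (∫ x in Icc (winv ρ) 1, v x) ≤ ∫ _x in Icc (winv ρ) 1, vbar :=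
        setIntegral_mono_on (hv_int.mono_set hsub)
          (integrableOn_const measure_Icc_lt_top.ne) measurableSet_Icc
          fun x hx => (hv_mem x (hsub hx)).2
      have hconst : (∫ _x in Icc (winv ρ) 1, vbar) = (1 - winv ρ) * vbar := by
        rw [setIntegral_const, Real.volume_real_Icc_of_le (by linarith), smul_eq_mul]
      nlinarith
  -- F is antitone
  have Fanti : ∀ r1 r2 : ℝ, r1 ≤ r2 → F r2 ≤ F r1 := by
    intro r1 r2 hr
    refine setIntegral_mono_on (Fint hw_cont hw_range hv_int r2)
      (Fint hw_cont hw_range hv_int r1) measurableSet_Icc fun x hx => ?_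
    have hv0 : 0 ≤ v x := le_of_lt (hvmin.trans_le (hv_mem x hx).1)
    exact mul_le_mul_of_nonneg_left
      (max_le_max (by linarith : w x - r2 ≤ w x - r1) le_rfl) hv0
  -- fixed point: F ρ* = ρ*
  obtain ⟨hA0s, hAbs, hFs⟩ := master ρstar hρstar
  have hAspos : (0:ℝ) < 1 + ∫ x in Icc (winv ρstar) 1, v x := by linarith
  have hGstar : F ρstar - ρstar = 0 := by
    have := hh ρstar
    rw [hfix] at this
    field_simp at this
    rw [hFs]
    linarith [this]
  intro ρ hρ
  obtain ⟨hA0, hAb, hFρ⟩ := master ρ hρ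
  set A := ∫ x in Icc (winv ρ) 1, v x
  have hApos : (0:ℝ) < 1 + A := by linarith
  have ht : (h ρ - ρ) * (1 + A) = F ρ - ρ := by
    rw [hh ρ]
    change (_ / (1 + A) - ρ) * (1 + A) = _
    rw [sub_mul, div_mul_cancel₀ _ hApos.ne']
    rw [hFρ]
    ring
  set d := ρ - ρstar with hd
  set t := h ρ - ρ with htd
  -- main inequality: d * t * (1 + vbar) ≤ -d^2
  have hmain : d * t * (1 + vbar) ≤ -d ^ 2 := by
    rcases le_or_gt ρstar ρ with hc | hc
    · have hdpos : 0 ≤ d := by simp [hd]; linarith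
      have hFle : F ρ ≤ F ρstar := Fanti _ _ hc
      have hG : F ρ - ρ ≤ -d := by simp [hd]; linarith
      have htneg : t ≤ 0 := by nlinarith
      nlinarith [mul_nonneg (mul_nonneg hdpos (neg_nonneg.2 htneg)) (by linarith : (0:ℝ) ≤ vbar - A)]
    · have hdneg : d ≤ 0 := by simp [hd]; linarith
      have hFle : F ρstar ≤ F ρ := Fanti _ _ hc.le
      have hG : -d ≤ F ρ - ρ := by simp [hd]; linarith
      have htpos : 0 ≤ t := by nlinarith
      nlinarith [mul_nonneg (mul_nonneg (neg_nonneg.2 hdneg) htpos) (by linarith : (0:ℝ) ≤ vbar - A)]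
  -- conclude
  have : -(1 / (1 + vbar)) * d ^ 2 = (-d ^ 2) / (1 + vbar) := by ring
  rw [this, le_div_iff₀ h1v]
  linarith [hmain]
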